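/- Let b>0 and α∈(1,2). For every ε₀ ∈ (0, π/2) and every t ≥ 0, there exist constants C₃, C₄ > 0 (depending only on b, α, ε₀ and t) such that |∫₀^t v_s(z) ds| ≤ C₃ + C₄ |z|^{2−α} for all z ∈ ℂ with Arg(z) ∈ [π/2 + ε₀, π] and |z| ≥ 2. -/

import Mathlib

open Real

/-- The complex extension of the function `v_s(z)`, defined via principal-branch
complex powers (with the convention `0 ^ β = 0`). -/
noncomputable def vC (b α : ℝ) (s : ℝ) (z : ℂ) : ℂ :=
  ((1 / ((α : ℂ) * (b : ℂ)) + z ^ ((1 : ℂ) - (α : ℂ))) * Complex.exp ((b * (α - 1) * s : ℝ) : ℂ)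
      - 1 / ((α : ℂ) * (b : ℂ))) ^ ((1 : ℂ) / (1 - (α : ℂ)))

lemma sin_lower_aux {a bb x : ℝ} (hab : a ≤ x) (hxb : x ≤ bb) (ha : 0 ≤ a) (hb : bb ≤ π) :
    2 / π * min a (π - bb) ≤ Real.sin x := by
  have hπ := Real.pi_pos
  rcases le_or_gt x (π / 2) with h | h
  · calc 2 / π * min a (π - bb) ≤ 2 / π * x := by
          apply mul_le_mul_of_nonneg_left (le_trans (min_le_left _ _) hab) (by positivity)
      _ ≤ Real.sin x := Real.mul_le_sin (by linarith) h
  · rw [← Real.sin_pi_sub]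
    calc 2 / π * min a (π - bb) ≤ 2 / π * (π - x) := by
          apply mul_le_mul_of_nonneg_left (le_trans (min_le_right _ _) (by linarith)) (by positivity)
      _ ≤ Real.sin (π - x) := Real.mul_le_sin (by linarith) (by linarith)

set_option maxHeartbeats 1000000 in
theorem stmt_5 (b α : ℝ) (hb : 0 < b) (hα : 1 < α) (hα2 : α < 2) :
    ∀ ε₀ : ℝ, 0 < ε₀ → ε₀ < π / 2 → ∀ t : ℝ, 0 ≤ t →
      ∃ C₃ C₄ : ℝ, 0 < C₃ ∧ 0 < C₄ ∧
        ∀ z : ℂ, π / 2 + ε₀ ≤ Complex.arg z → Complex.arg z ≤ π → 2 ≤ ‖z‖ →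
          ‖∫ s in (0:ℝ)..t, vC b α s z‖ ≤ C₃ + C₄ * ‖z‖ ^ (2 - α) := by
  intro ε₀ hε1 hε2 t ht
  have hπ := Real.pi_pos
  have hα1 : (0:ℝ) < α - 1 := by linarith
  have h2α : (0:ℝ) < 2 - α := by linarith
  set β : ℝ := 1 / (1 - α) with hβ
  have h1α : (1:ℝ) - α ≠ 0 := by linarith
  have hα1' : α - 1 ≠ 0 := by linarith
  have hβ1 : β + 1 = -((2 - α) / (α - 1)) := by
    rw [hβ]; field_simp; ring
  have hβlt : β < -1 := by
    have : (0:ℝ) < (2 - α) / (α - 1) := by positivity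
    linarith
  have hβneg : β < 0 := by linarith
  set m : ℝ := 2 / π * min ((α - 1) * (π / 2 + ε₀)) ((2 - α) * π) with hm
  have hmpos : 0 < m := by
    apply mul_pos (by positivity)
    exact lt_min (by positivity) (by positivity)
  set k : ℝ := (α - 1) / α with hk
  have hkpos : 0 < k := by positivity
  set c₂ : ℝ := k / 2 * min 1 m with hc2
  have hc2pos : 0 < c₂ := by
    apply mul_pos (by positivity) (lt_min one_pos hmpos)
  set c₀ : ℝ := min m c₂ / 2 with hc0def
  have hc0 : 0 < c₀ := by
    apply div_pos (lt_min hmpos hc2pos) two_pos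
  refine ⟨1, c₀ ^ β * ((α - 1) / (2 - α)), one_pos, by positivity, ?_⟩
  intro z harg1 harg2 hzabs
  have hz0 : z ≠ 0 := by
    intro h; rw [h] at hzabs; simp at hzabs; linarith
  set θ : ℝ := Complex.arg z with hθ
  set R : ℝ := ‖z‖ with hR
  have hRpos : (0:ℝ) < R := by linarith
  set δ : ℝ := R ^ (1 - α) with hδdef
  have hδpos : 0 < δ := Real.rpow_pos_of_pos hRpos _
  have hcast : ((1:ℂ) - (α:ℂ)) = (((1 - α : ℝ)) : ℂ) := by push_cast; ring
  have habs_zc : ‖z ^ ((1:ℂ) - (α:ℂ))‖ = δ := by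
    rw [hcast, Complex.norm_cpow_real]
  have him_zc : (z ^ ((1:ℂ) - (α:ℂ))).im = δ * Real.sin ((1 - α) * θ) := by
    rw [Complex.cpow_def_of_ne_zero hz0, Complex.exp_im]
    have h1 : (Complex.log z * ((1:ℂ) - (α:ℂ))).re = Real.log R * (1 - α) := by
      simp [Complex.mul_re, Complex.log_re, Complex.log_im, hR]
    have h2 : (Complex.log z * ((1:ℂ) - (α:ℂ))).im = (1 - α) * θ := by
      simp [Complex.mul_im, Complex.log_re, Complex.log_im, hθ, hR]
      ring
    rw [h1, h2, hδdef, Real.rpow_def_of_pos hRpos]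
  have hre_zc : -δ ≤ (z ^ ((1:ℂ) - (α:ℂ))).re := by
    have h1 := Complex.abs_re_le_norm (z ^ ((1:ℂ) - (α:ℂ)))
    rw [habs_zc] at h1
    have := neg_abs_le (z ^ ((1:ℂ) - (α:ℂ))).re
    linarith
  have hsin : m ≤ Real.sin ((α - 1) * θ) := by
    have hx1 : (α - 1) * (π / 2 + ε₀) ≤ (α - 1) * θ :=
      mul_le_mul_of_nonneg_left harg1 hα1.le
    have hx2 : (α - 1) * θ ≤ (α - 1) * π := mul_le_mul_of_nonneg_left harg2 hα1.le
    have hx3 : (α - 1) * π ≤ π := by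
      have := mul_le_mul_of_nonneg_right (by linarith : α - 1 ≤ 1) hπ.le
      linarith
    have h := sin_lower_aux (a := (α - 1) * (π / 2 + ε₀)) (bb := (α - 1) * π)
      (x := (α - 1) * θ) hx1 hx2 (by positivity) hx3
    have he : π - (α - 1) * π = (2 - α) * π := by ring
    rw [he] at h
    exact h
  have hsinneg : Real.sin ((1 - α) * θ) = - Real.sin ((α - 1) * θ) := by
    rw [show (1 - α) * θ = -((α - 1) * θ) by ring, Real.sin_neg]
  -- pointwise bound
  have key : ∀ s : ℝ, 0 ≤ s → ‖vC b α s z‖ ≤ c₀ ^ β * (s + δ) ^ β := by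
    intro s hs
    set e : ℝ := Real.exp (b * (α - 1) * s) with he
    have he1 : 1 ≤ e := Real.one_le_exp (by positivity)
    have he4 : b * (α - 1) * s ≤ e - 1 := by
      have := Real.add_one_le_exp (b * (α - 1) * s); rw [← he] at this; linarith
    set q : ℝ := 1 / (α * b) with hq
    have hqpos : 0 < q := by positivity
    have hqk : q * (b * (α - 1)) = k := by rw [hq, hk]; field_simp
    set W : ℂ := (1 / ((α : ℂ) * (b : ℂ)) + z ^ ((1 : ℂ) - (α : ℂ))) *
        Complex.exp ((b * (α - 1) * s : ℝ) : ℂ) - 1 / ((α : ℂ) * (b : ℂ)) with hW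
    have hqc : (1 / ((α : ℂ) * (b : ℂ))) = ((q : ℝ) : ℂ) := by
      rw [hq]; push_cast; ring
    have hexpc : Complex.exp ((b * (α - 1) * s : ℝ) : ℂ) = ((e : ℝ) : ℂ) := by
      rw [he, Complex.ofReal_exp]
    have hWim : W.im = (z ^ ((1:ℂ) - (α:ℂ))).im * e := by
      rw [hW, hqc, hexpc]; simp
    have hWre : W.re = q * (e - 1) + (z ^ ((1:ℂ) - (α:ℂ))).re * e := by
      rw [hW, hqc, hexpc]; simp; ring
    have hspos : 0 < Real.sin ((α - 1) * θ) := lt_of_lt_of_le hmpos hsin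
    have hepos : (0:ℝ) < e := by linarith
    have hImlb : m * δ * e ≤ |W.im| := by
      have hW2 : W.im = -(Real.sin ((α - 1) * θ) * δ * e) := by
        rw [hWim, him_zc, hsinneg]; ring
      rw [hW2, abs_neg, abs_of_nonneg
        (mul_nonneg (mul_nonneg hspos.le hδpos.le) hepos.le)]
      have t1 : m * δ ≤ Real.sin ((α - 1) * θ) * δ :=
        mul_le_mul_of_nonneg_right hsin hδpos.le
      exact mul_le_mul_of_nonneg_right t1 hepos.le
    have habsW_im : m * δ * e ≤ ‖W‖ :=
      le_trans hImlb (Complex.abs_im_le_norm W)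
    have hδle : m * δ ≤ ‖W‖ :=
      le_trans (le_mul_of_one_le_right (mul_nonneg hmpos.le hδpos.le) he1) habsW_im
    have hks : k * s ≤ q * (e - 1) := by
      have h := mul_le_mul_of_nonneg_left he4 hqpos.le
      calc k * s = q * (b * (α - 1) * s) := by rw [← hqk]; ring
        _ ≤ q * (e - 1) := h
    have hsle : c₂ * s ≤ ‖W‖ := by
      rcases le_or_gt (δ * e) (q * (e - 1) / 2) with hcase | hcase
      · have hre_e : -(δ * e) ≤ (z ^ ((1:ℂ) - (α:ℂ))).re * e := by
          have := mul_le_mul_of_nonneg_right hre_zc hepos.le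
          linarith
        have h1 : q * (e - 1) / 2 ≤ W.re := by
          rw [hWre]; linarith
        have h2 := (le_abs_self W.re).trans (Complex.abs_re_le_norm W)
        have hc2k : c₂ ≤ k / 2 := by
          rw [hc2]
          exact mul_le_of_le_one_right (by positivity) (min_le_left _ _)
        have h3 := mul_le_mul_of_nonneg_right hc2k hs
        linarith
      · have hm1 : c₂ ≤ k / 2 * m := by
          rw [hc2]
          exact mul_le_mul_of_nonneg_left (min_le_right _ _) (by positivity)
        have h5 : m * (k * s) ≤ m * (q * (e - 1)) :=
          mul_le_mul_of_nonneg_left hks hmpos.le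
        have h6 : m * (q * (e - 1) / 2) ≤ m * (δ * e) :=
          mul_le_mul_of_nonneg_left hcase.le hmpos.le
        have h7 : c₂ * s ≤ k / 2 * m * s := mul_le_mul_of_nonneg_right hm1 hs
        linarith [h5, h6, h7, habsW_im]
    have hWlb : c₀ * (s + δ) ≤ ‖W‖ := by
      have h1' : c₀ ≤ m / 2 := by rw [hc0def]; linarith [min_le_left m c₂]
      have h2' : c₀ ≤ c₂ / 2 := by rw [hc0def]; linarith [min_le_right m c₂]
      have h1'' := mul_le_mul_of_nonneg_right h1' hδpos.le
      have h2'' := mul_le_mul_of_nonneg_right h2' hs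
      have : c₀ * (s + δ) = c₀ * s + c₀ * δ := by ring
      linarith [h1'', h2'', hδle, hsle]
    have hvc : ‖vC b α s z‖ = ‖W‖ ^ β := by
      unfold vC
      rw [← hW, show (1:ℂ) / (1 - (α:ℂ)) = ((β : ℝ) : ℂ) by rw [hβ]; push_cast; ring,
        Complex.norm_cpow_real]
    rw [hvc]
    calc ‖W‖ ^ β ≤ (c₀ * (s + δ)) ^ β :=
          Real.rpow_le_rpow_of_nonpos (by positivity) hWlb hβneg.le
      _ = c₀ ^ β * (s + δ) ^ β := Real.mul_rpow hc0.le (by positivity)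
  -- integrability of the bound
  have hg_cont : ContinuousOn (fun s : ℝ => c₀ ^ β * (s + δ) ^ β) (Set.uIcc 0 t) := by
    apply ContinuousOn.mul continuousOn_const
    apply ContinuousOn.rpow_const ((continuous_id.add continuous_const).continuousOn)
    intro x hx
    left
    rw [Set.uIcc_of_le ht] at hx
    have := hx.1
    show x + δ ≠ 0
    exact (show (0:ℝ) < x + δ by linarith).ne'
  have hgint : IntervalIntegrable (fun s : ℝ => c₀ ^ β * (s + δ) ^ β)
      MeasureTheory.volume 0 t := hg_cont.intervalIntegrable
  have hbd : ‖∫ s in (0:ℝ)..t, vC b α s z‖ ≤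
      |∫ s in (0:ℝ)..t, c₀ ^ β * (s + δ) ^ β| := by
    apply intervalIntegral.norm_integral_le_abs_of_norm_le _ hgint
    apply MeasureTheory.ae_restrict_of_forall_mem measurableSet_uIoc
    intro s hsmem
    rw [Set.uIoc_of_le ht] at hsmem
    exact key s hsmem.1.le
  have hgval : (∫ s in (0:ℝ)..t, c₀ ^ β * (s + δ) ^ β) =
      c₀ ^ β * (((t + δ) ^ (β + 1) - δ ^ (β + 1)) / (β + 1)) := by
    rw [intervalIntegral.integral_const_mul]
    congr 1
    have hcomp := intervalIntegral.integral_comp_add_right (a := (0:ℝ)) (b := t)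
      (fun u : ℝ => u ^ β) δ
    rw [hcomp, zero_add, integral_rpow]
    right
    constructor
    · intro h; rw [h] at hβlt; norm_num at hβlt
    · exact Set.notMem_uIcc_of_lt hδpos (by linarith)
  have hδβ : δ ^ (β + 1) = R ^ (2 - α) := by
    rw [hδdef, ← Real.rpow_mul (by positivity : (0:ℝ) ≤ R)]
    congr 1
    rw [hβ]; field_simp; ring
  have hXnn : 0 ≤ ((t + δ) ^ (β + 1) - δ ^ (β + 1)) / (β + 1) := by
    apply div_nonneg_of_nonpos
    · have : (t + δ) ^ (β + 1) ≤ δ ^ (β + 1) :=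
        Real.rpow_le_rpow_of_nonpos hδpos (by linarith) (by linarith)
      linarith
    · linarith
  have hXle : ((t + δ) ^ (β + 1) - δ ^ (β + 1)) / (β + 1) ≤
      δ ^ (β + 1) * ((α - 1) / (2 - α)) := by
    have hQ : 0 ≤ (t + δ) ^ (β + 1) := Real.rpow_nonneg (by linarith) _
    have hDpos : (0:ℝ) < (2 - α) / (α - 1) := by positivity
    set P := δ ^ (β + 1) with hP
    set Q := (t + δ) ^ (β + 1) with hQdef
    have hrw : (Q - P) / (β + 1) = (P - Q) / ((2 - α) / (α - 1)) := by
      rw [hβ1, div_neg, ← neg_div, neg_sub]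
    have hrw2 : P * ((α - 1) / (2 - α)) = P / ((2 - α) / (α - 1)) := by
      field_simp
    rw [hrw, hrw2]
    exact (div_le_div_iff_of_pos_right hDpos).mpr (by linarith)
  have hcnn : (0:ℝ) ≤ c₀ ^ β := Real.rpow_nonneg hc0.le β
  have hfin : (0:ℝ) ≤ c₀ ^ β * ((α - 1) / (2 - α)) * R ^ (2 - α) := by positivity
  have hnorm : ‖∫ s in (0:ℝ)..t, vC b α s z‖ =
      ‖∫ s in (0:ℝ)..t, vC b α s z‖ := rfl
  rw [hnorm]
  calc ‖∫ s in (0:ℝ)..t, vC b α s z‖ ≤ |∫ s in (0:ℝ)..t, c₀ ^ β * (s + δ) ^ β| := hbd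
    _ = c₀ ^ β * (((t + δ) ^ (β + 1) - δ ^ (β + 1)) / (β + 1)) := by
        rw [hgval, abs_of_nonneg (mul_nonneg hcnn hXnn)]
    _ ≤ c₀ ^ β * (δ ^ (β + 1) * ((α - 1) / (2 - α))) := mul_le_mul_of_nonneg_left hXle hcnn
    _ = c₀ ^ β * ((α - 1) / (2 - α)) * R ^ (2 - α) := by rw [hδβ]; ring
    _ ≤ 1 + c₀ ^ β * ((α - 1) / (2 - α)) * R ^ (2 - α) := by linarith
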